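/- Let A, B, B' be Banach spaces over a nontrivially normed complete field (e.g., ℝ), let s : A →L B be a continuous linear map admitting a continuous linear right inverse (t : B →L A with s ∘ t = id_B), and let i : B' →L B be any continuous linear map. Let E = {(a, b') ∈ A × B' | s a = i b'}, a closed subspace of A × B', with first projection i' : E → A. If i' admits a continuous linear left inverse, then i admits a continuous linear left inverse. -/

import Mathlib

/-- Descent in the diptych Ban: if `s : A →L B` has a continuous linear
right inverse, `i : B' →L B` is any continuous linear map, and the first projection
`i' : E →L A` of the fibered product `E = {(a,b') | s a = i b'}` admits a continuous
linear left inverse, then `i` admits a continuous linear left inverse. -/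
theorem banach_descent
    {A B B' : Type*}
    [NormedAddCommGroup A] [NormedSpace ℝ A] [CompleteSpace A]
    [NormedAddCommGroup B] [NormedSpace ℝ B] [CompleteSpace B]
    [NormedAddCommGroup B'] [NormedSpace ℝ B'] [CompleteSpace B']
    (s : A →L[ℝ] B) (t : B →L[ℝ] A) (hst : s.comp t = ContinuousLinearMap.id ℝ B)
    (i : B' →L[ℝ] B)
    (j' : A →L[ℝ] (LinearMap.ker (((s.comp (ContinuousLinearMap.fst ℝ A B') -
        i.comp (ContinuousLinearMap.snd ℝ A B') : A × B' →L[ℝ] B) : A × B' →ₗ[ℝ] B))))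
    (hj' : j'.comp ((ContinuousLinearMap.fst ℝ A B').comp
        (Submodule.subtypeL (LinearMap.ker (((s.comp (ContinuousLinearMap.fst ℝ A B') -
          i.comp (ContinuousLinearMap.snd ℝ A B') : A × B' →L[ℝ] B) : A × B' →ₗ[ℝ] B))))) =
        ContinuousLinearMap.id ℝ (LinearMap.ker (((s.comp (ContinuousLinearMap.fst ℝ A B') -
          i.comp (ContinuousLinearMap.snd ℝ A B') : A × B' →L[ℝ] B) : A × B' →ₗ[ℝ] B)))) :
    ∃ j : B →L[ℝ] B', j.comp i = ContinuousLinearMap.id ℝ B' := by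
  refine ⟨(ContinuousLinearMap.snd ℝ A B').comp
      ((Submodule.subtypeL _).comp (j'.comp t)), ?_⟩
  ext b'
  have hmem : ((t (i b'), b') : A × B') ∈ LinearMap.ker (((s.comp (ContinuousLinearMap.fst ℝ A B') -
      i.comp (ContinuousLinearMap.snd ℝ A B') : A × B' →L[ℝ] B) : A × B' →ₗ[ℝ] B)) := by
    simp [LinearMap.mem_ker, sub_eq_zero]
    exact congrFun (congrArg DFunLike.coe hst) (i b')
  have h1 : j' (t (i b')) = ⟨(t (i b'), b'), hmem⟩ := by
    have := congrFun (congrArg DFunLike.coe hj') ⟨(t (i b'), b'), hmem⟩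
    exact this
  show ((j' (t (i b')) : A × B')).2 = b'
  rw [h1]
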